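/- Let F be a regular thin family of finite subsets of ℕ, M ∈ [ℕ]^∞ and l ∈ ℕ. Then for every finite partition Plm_l(F↾M) = P₁ ∪ … ∪ P_p of the set of plegma l-tuples in F↾M, there exist L ∈ [M]^∞ and 1 ≤ i₀ ≤ p such that Plm_l(F↾L) ⊆ P_{i₀}. -/

import Mathlib

open Set Filter

namespace HOSM

/-- `t` is an initial segment of the finite set `s` (w.r.t. the increasing enumerations). -/
def InitSeg (t s : Finset ℕ) : Prop :=
  t ⊆ s ∧ ∀ a ∈ s, ∀ b ∈ t, a ≤ b → a ∈ t

/-- `t` is a proper initial segment of `s`. -/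
def ProperInitSeg (t s : Finset ℕ) : Prop := InitSeg t s ∧ t ≠ s

/-- The initial-segment closure `F̂` of a family `F`. -/
def hat (F : Set (Finset ℕ)) : Set (Finset ℕ) := {t | ∃ s ∈ F, InitSeg t s}

/-- The restriction `F↾L = {s ∈ F : s ⊆ L}`. -/
def restrict (F : Set (Finset ℕ)) (L : Set ℕ) : Set (Finset ℕ) :=
  {s | s ∈ F ∧ (s : Set ℕ) ⊆ L}

/-- `F` is hereditary: it contains all subsets of its members. -/
def Hereditary (F : Set (Finset ℕ)) : Prop := ∀ s ∈ F, ∀ t ⊆ s, t ∈ F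

/-- `elt s k` is the `k`-th smallest element of `s` (0-indexed; junk value `0` out of range). -/
def elt (s : Finset ℕ) (k : ℕ) : ℕ := (s.sort (· ≤ ·)).getD k 0

/-- `F` is spreading. -/
def Spreading (F : Set (Finset ℕ)) : Prop :=
  ∀ s ∈ F, ∀ t : Finset ℕ, t.card = s.card → (∀ k < s.card, elt s k ≤ elt t k) → t ∈ F

/-- The characteristic function of a finite set, as an element of `{0,1}^ℕ`. -/
def chi (s : Finset ℕ) : ℕ → Bool := fun n => decide (n ∈ s)

/-- `F` is compact: the set of characteristic functions of its members is closed in `{0,1}^ℕ`. -/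
def CompactFam (F : Set (Finset ℕ)) : Prop := IsClosed (chi '' F)

/-- `F` is regular: compact, hereditary and spreading. -/
def RegularFam (F : Set (Finset ℕ)) : Prop := CompactFam F ∧ Hereditary F ∧ Spreading F

/-- `F` is thin: no member is a proper initial segment of another member. -/
def Thin (F : Set (Finset ℕ)) : Prop := ∀ s ∈ F, ∀ t ∈ F, ¬ ProperInitSeg t s

/-- `F` is regular thin: thin, and its closure `F̂` is regular. -/
def RegularThin (F : Set (Finset ℕ)) : Prop := Thin F ∧ RegularFam (hat F)

/-- The relation on finite sets: `extRel F t s` iff `t ∈ F̂` and `s` is a proper initial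
segment of `t`.  Rank with respect to it computes the order `o_{F̂}`. -/
def extRel (F : Set (Finset ℕ)) (t s : Finset ℕ) : Prop := t ∈ hat F ∧ ProperInitSeg s t

open scoped Classical in
/-- The order `o(F)` of a family: the ordinal rank of the tree `F̂` at `∅`
(junk value `0` if `F̂` is ill-founded). -/
noncomputable def famOrder (F : Set (Finset ℕ)) : Ordinal :=
  if h : Acc (extRel F) (∅ : Finset ℕ) then h.rank else 0

/-- `nth L k` is the `k`-th smallest element of the set `L` (0-indexed). -/
noncomputable def nth (L : Set ℕ) (k : ℕ) : ℕ := Nat.nth (· ∈ L) k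

/-- `L(s) = {L(k) : k ∈ s}` for a finite set `s`. -/
noncomputable def mapSet (L : Set ℕ) (s : Finset ℕ) : Finset ℕ := s.image (nth L)

/-- An `l`-tuple of nonempty finite subsets of `ℕ` is a plegma family. -/
def IsPlegma {l : ℕ} (s : Fin l → Finset ℕ) : Prop :=
  (∀ i, (s i).Nonempty) ∧
  (∀ i j : Fin l, i < j → ∀ k, k < (s i).card → k < (s j).card →
      elt (s i) k < elt (s j) k) ∧
  (∀ i j : Fin l, ∀ k, k < (s i).card → k + 1 < (s j).card →
      elt (s i) k < elt (s j) (k + 1))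

/-- A plegma pair. -/
def IsPlegmaPair (s t : Finset ℕ) : Prop := IsPlegma ![s, t]

/-- `Plm l G`: the set of plegma `l`-tuples with members in `G`. -/
def Plm (l : ℕ) (G : Set (Finset ℕ)) : Set (Fin l → Finset ℕ) :=
  {s | IsPlegma s ∧ ∀ i, s i ∈ G}

/-- `s` is an initial segment of the infinite set `N`. -/
def InitSegOfInf (s : Finset ℕ) (N : Set ℕ) : Prop :=
  (s : Set ℕ) ⊆ N ∧ ∀ a ∈ N, ∀ b ∈ s, a ≤ b → a ∈ s

/-- `F` is very large in `M`: every infinite subset of `M` has an initial segment in `F`. -/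
def VeryLarge (F : Set (Finset ℕ)) (M : Set ℕ) : Prop :=
  ∀ N : Set ℕ, N ⊆ M → N.Infinite → ∃ s ∈ F, InitSegOfInf s N

/-- `F↾↾L`. -/
def restrict2 (F : Set (Finset ℕ)) (L : Set ℕ) : Set (Finset ℕ) :=
  {s | s ∈ restrict F L ∧ ∀ j, j + 1 < s.card → ∃ l ∈ L, elt s j < l ∧ l < elt s (j + 1)}

/-- `φ` is plegma preserving on `D`. -/
def PlegmaPreserving (D : Set (Finset ℕ)) (φ : Finset ℕ → Finset ℕ) : Prop :=
  ∀ s₁ ∈ D, ∀ s₂ ∈ D, IsPlegmaPair s₁ s₂ → IsPlegmaPair (φ s₁) (φ s₂)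

end HOSM

open HOSM

namespace PR
open HOSM

def mkSeg (f : ℕ → ℕ) (c : ℕ) : Finset ℕ := (Finset.range c).image f

/-- strict monotonicity below a bound -/
def SMO (f : ℕ → ℕ) (c : ℕ) : Prop := ∀ ⦃a b : ℕ⦄, a < b → b < c → f a < f b

lemma SMO.mono {f c c'} (h : SMO f c') (hcc : c ≤ c') : SMO f c :=
  fun _ _ hab hb => h hab (lt_of_lt_of_le hb hcc)

lemma strictMono_smo {f : ℕ → ℕ} (h : StrictMono f) (c : ℕ) : SMO f c :=
  fun _ _ hab _ => h hab

lemma SMO.injOn {f c} (h : SMO f c) : Set.InjOn f (Finset.range c : Set ℕ) := by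
  intro a ha b hb hab
  simp only [Finset.coe_range, Set.mem_Iio] at ha hb
  by_contra hne
  rcases lt_or_gt_of_ne hne with h1 | h1
  · exact absurd hab (h h1 hb).ne
  · exact absurd hab.symm (h h1 ha).ne

lemma mem_mkSeg {f c x} : x ∈ mkSeg f c ↔ ∃ k, k < c ∧ f k = x := by
  simp [mkSeg]

lemma card_mkSeg {f c} (h : SMO f c) : (mkSeg f c).card = c := by
  rw [mkSeg, Finset.card_image_of_injOn h.injOn, Finset.card_range]

lemma elt_eq_get {s : Finset ℕ} {q : ℕ} (hq : q < s.card) :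
    elt s q = (s.sort (· ≤ ·))[q]'(by rwa [Finset.length_sort]) := by
  rw [elt, List.getD_eq_getElem]

lemma elt_mem {s : Finset ℕ} {q : ℕ} (hq : q < s.card) : elt s q ∈ s := by
  rw [elt_eq_get hq]
  exact (Finset.mem_sort _).1 (List.getElem_mem _)

lemma elt_strictMono {s : Finset ℕ} {q q' : ℕ} (h : q < q') (hq' : q' < s.card) :
    elt s q < elt s q' := by
  rw [elt_eq_get (h.trans hq'), elt_eq_get hq']
  have := List.sortedLT_iff_pairwise.1 s.sortedLT_sort
  exact List.Pairwise.rel_get_of_lt this (by simpa using h)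

lemma elt_smo (s : Finset ℕ) : SMO (elt s) s.card := fun _ _ hab hb => elt_strictMono hab hb

lemma exists_elt {s : Finset ℕ} {x : ℕ} (hx : x ∈ s) : ∃ q, q < s.card ∧ elt s q = x := by
  have : x ∈ s.sort (· ≤ ·) := (Finset.mem_sort _).2 hx
  obtain ⟨q, hq, he⟩ := List.getElem_of_mem this
  exact ⟨q, by rwa [Finset.length_sort] at hq, by rw [elt_eq_get (by rwa [Finset.length_sort] at hq)]; exact he⟩

lemma eq_mkSeg_self (s : Finset ℕ) : s = mkSeg (elt s) s.card := by
  ext x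
  rw [mem_mkSeg]
  constructor
  · exact fun hx => exists_elt hx
  · rintro ⟨k, hk, rfl⟩; exact elt_mem hk

lemma elt_mkSeg {f c q} (h : SMO f c) (hq : q < c) : elt (mkSeg f c) q = f q := by
  have hcard : (mkSeg f c).card = c := card_mkSeg h
  have hmem : ∀ i : Fin c, f i ∈ mkSeg f c := fun i => mem_mkSeg.2 ⟨i, i.2, rfl⟩
  have hsm : StrictMono (fun i : Fin c => f i) := fun i j hij => h hij j.2
  have := Finset.orderEmbOfFin_unique hcard hmem hsm
  have happ := congrFun this ⟨q, hq⟩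
  rw [happ, Finset.orderEmbOfFin_apply]
  rw [elt_eq_get (by rwa [hcard])]
  rfl

lemma initSeg_mkSeg {f c c'} (h : SMO f c') (hcc : c ≤ c') :
    InitSeg (mkSeg f c) (mkSeg f c') := by
  constructor
  · intro x hx
    rw [mem_mkSeg] at hx ⊢
    obtain ⟨k, hk, rfl⟩ := hx
    exact ⟨k, hk.trans_le hcc, rfl⟩
  · intro a ha b hb hab
    rw [mem_mkSeg] at ha hb ⊢
    obtain ⟨k', hk', rfl⟩ := ha
    obtain ⟨k, hk, rfl⟩ := hb
    refine ⟨k', ?_, rfl⟩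
    by_contra hlt
    push_neg at hlt
    have : f k < f k' := h (hk.trans_le hlt) hk'
    omega

lemma mkSeg_card_lt_ne {f c c'} (h : SMO f c') (hcc : c < c') : mkSeg f c ≠ mkSeg f c' := by
  intro he
  have h1 : (mkSeg f c).card = c := card_mkSeg (h.mono hcc.le)
  have h2 : (mkSeg f c').card = c' := card_mkSeg h
  rw [he, h2] at h1
  omega

lemma properInitSeg_mkSeg {f c c'} (h : SMO f c') (hcc : c < c') :
    ProperInitSeg (mkSeg f c) (mkSeg f c') :=
  ⟨initSeg_mkSeg h hcc.le, mkSeg_card_lt_ne h hcc⟩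

/-- thinness forces equal lengths for nested `mkSeg`s in `F`. -/
lemma thin_unique {F : Set (Finset ℕ)} (hThin : Thin F) {f c c'}
    (h : SMO f (max c c')) (h1 : mkSeg f c ∈ F) (h2 : mkSeg f c' ∈ F) : c = c' := by
  rcases lt_trichotomy c c' with hlt | he | hlt
  · exact absurd (properInitSeg_mkSeg (h.mono (le_max_right c c')) hlt) (hThin _ h2 _ h1)
  · exact he
  · exact absurd (properInitSeg_mkSeg (h.mono (le_max_left c c')) hlt) (hThin _ h1 _ h2)

/-- A downward-closed finset of `ℕ` is an initial range. -/
lemma dcEq (J : Finset ℕ) (h : ∀ k ∈ J, ∀ k' < k, k' ∈ J) : J = Finset.range J.card := by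
  have hsub : J ⊆ Finset.range J.card := by
    intro x hx
    rw [Finset.mem_range]
    by_contra hge
    push_neg at hge
    have : Finset.range (x + 1) ⊆ J := by
      intro k hk
      rw [Finset.mem_range] at hk
      rcases Nat.lt_succ_iff_lt_or_eq.1 hk with h' | rfl
      · exact h x hx k h'
      · exact hx
    have := Finset.card_le_card this
    rw [Finset.card_range] at this
    omega
  exact Finset.eq_of_subset_of_card_le hsub (by rw [Finset.card_range])

lemma initSegOfInf_eq {f : ℕ → ℕ} (hf : StrictMono f) {t : Finset ℕ}
    (ht : InitSegOfInf t (Set.range f)) : t = mkSeg f t.card := by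
  classical
  set X := t.sup id with hX
  set J := (Finset.range (X + 1)).filter (fun k => f k ∈ t) with hJ
  have htJ : t = J.image f := by
    ext x
    constructor
    · intro hx
      obtain ⟨k, rfl⟩ := ht.1 hx
      have hk : k ≤ X := le_trans (hf.le_apply) (Finset.le_sup (f := id) hx)
      exact Finset.mem_image.2 ⟨k, Finset.mem_filter.2 ⟨Finset.mem_range.2 (by omega), hx⟩, rfl⟩
    · intro hx
      obtain ⟨k, hk, rfl⟩ := Finset.mem_image.1 hx
      exact (Finset.mem_filter.1 hk).2
  have hdc : ∀ k ∈ J, ∀ k' < k, k' ∈ J := by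
    intro k hk k' hk'
    rw [hJ, Finset.mem_filter, Finset.mem_range] at hk ⊢
    refine ⟨by omega, ?_⟩
    exact ht.2 (f k') ⟨k', rfl⟩ (f k) hk.2 (hf hk').le
  have hJr : J = Finset.range J.card := dcEq J hdc
  have hcard : J.card = t.card := by
    rw [htJ, Finset.card_image_of_injective _ hf.injective]
  have h2 : t = mkSeg f J.card := by
    rw [htJ]; unfold mkSeg; rw [← hJr]
  rwa [hcard] at h2

lemma initSegOfInf_mkSeg {f : ℕ → ℕ} (hf : StrictMono f) (c : ℕ) :
    InitSegOfInf (mkSeg f c) (Set.range f) := by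
  constructor
  · intro x hx
    rw [Finset.mem_coe, mem_mkSeg] at hx
    obtain ⟨k, _, rfl⟩ := hx
    exact ⟨k, rfl⟩
  · rintro a ⟨k', rfl⟩ b hb hab
    rw [mem_mkSeg] at hb ⊢
    obtain ⟨k, hk, rfl⟩ := hb
    exact ⟨k', by by_contra h'; push_neg at h'; exact absurd hab (by simpa using hf (hk.trans_le h')), rfl⟩

/-- finite version: an initial segment of `s` is `mkSeg (elt s)` of its card. -/
lemma initSeg_eq {s t : Finset ℕ} (ht : InitSeg t s) : t = mkSeg (elt s) t.card ∧ t.card ≤ s.card := by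
  classical
  set J := (Finset.range s.card).filter (fun k => elt s k ∈ t) with hJ
  have htJ : t = J.image (elt s) := by
    ext x
    constructor
    · intro hx
      obtain ⟨k, hk, rfl⟩ := exists_elt (ht.1 hx)
      exact Finset.mem_image.2 ⟨k, Finset.mem_filter.2 ⟨Finset.mem_range.2 hk, hx⟩, rfl⟩
    · intro hx
      obtain ⟨k, hk, rfl⟩ := Finset.mem_image.1 hx
      exact (Finset.mem_filter.1 hk).2
  have hdc : ∀ k ∈ J, ∀ k' < k, k' ∈ J := by
    intro k hk k' hk'
    rw [hJ, Finset.mem_filter, Finset.mem_range] at hk ⊢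
    refine ⟨by omega, ?_⟩
    exact ht.2 (elt s k') (elt_mem (by omega)) (elt s k) hk.2 (elt_strictMono hk' hk.1).le
  have hJr : J = Finset.range J.card := dcEq J hdc
  have hcard : J.card = t.card := by
    rw [htJ, Finset.card_image_of_injOn]
    intro a ha b hb hab
    rw [hJr, Finset.coe_range, Set.mem_Iio] at ha hb
    have hJc : J.card ≤ s.card := by
      have := Finset.card_le_card (hJ ▸ Finset.filter_subset _ _)
      simpa using this
    exact (elt_smo s).injOn (by simp; omega) (by simp; omega) hab
  have hJc : J.card ≤ s.card := by
    have := Finset.card_le_card (hJ ▸ Finset.filter_subset _ _)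
    simpa using this
  constructor
  · have h2 : t = mkSeg (elt s) J.card := by
      rw [htJ]; unfold mkSeg; rw [← hJr]
    rwa [hcard] at h2
  · omega

/-! ### Galvin's lemma via combinatorial forcing -/

section Galvin

variable (G : Set (Finset ℕ))

/-- `L` accepts `a`. -/
def GAcc (L : Set ℕ) (a : Finset ℕ) : Prop :=
  ∀ N : Set ℕ, N ⊆ L → N.Infinite → (∀ x ∈ N, ∀ y ∈ a, y < x) →
    ∃ t : Finset ℕ, InitSegOfInf t N ∧ a ∪ t ∈ G

/-- `L` rejects `a`. -/
def GRej (L : Set ℕ) (a : Finset ℕ) : Prop :=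
  ∀ L' : Set ℕ, L' ⊆ L → L'.Infinite → ¬ GAcc G L' a

variable {G}

lemma GAcc.mono {L L' : Set ℕ} {a} (h : GAcc G L a) (hs : L' ⊆ L) : GAcc G L' a :=
  fun N hN => h N (hN.trans hs)

lemma GRej.mono {L L' : Set ℕ} {a} (h : GRej G L a) (hs : L' ⊆ L) : GRej G L' a :=
  fun L'' hL'' => h L'' (hL''.trans hs)

lemma not_grej_self {L : Set ℕ} {t : Finset ℕ} (ht : t ∈ G) (hL : L.Infinite) :
    ¬ GRej G L t := by
  intro h
  refine h L subset_rfl hL ?_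
  intro N _ _ _
  refine ⟨∅, ⟨by simp, by simp⟩, by simpa using ht⟩

variable (G)

lemma exists_dec {L : Set ℕ} (hL : L.Infinite) (a : Finset ℕ) :
    ∃ L', L' ⊆ L ∧ L'.Infinite ∧ (GAcc G L' a ∨ GRej G L' a) := by
  by_cases h : GRej G L a
  · exact ⟨L, subset_rfl, hL, Or.inr h⟩
  · unfold GRej at h
    push_neg at h
    obtain ⟨L', h1, h2, h3⟩ := h
    exact ⟨L', h1, h2, Or.inl h3⟩

lemma exists_dec_finset {L : Set ℕ} (hL : L.Infinite) (A : Finset (Finset ℕ)) :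
    ∃ L', L' ⊆ L ∧ L'.Infinite ∧ ∀ a ∈ A, (GAcc G L' a ∨ GRej G L' a) := by
  classical
  induction A using Finset.induction_on with
  | empty => exact ⟨L, subset_rfl, hL, by simp⟩
  | @insert a A _ ih =>
    obtain ⟨L₁, hs₁, hi₁, hd₁⟩ := ih
    obtain ⟨L₂, hs₂, hi₂, hd₂⟩ := exists_dec G hi₁ a
    refine ⟨L₂, hs₂.trans hs₁, hi₂, ?_⟩
    intro b hb
    rcases Finset.mem_insert.1 hb with rfl | hb
    · exact hd₂
    · rcases hd₁ b hb with h | h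
      · exact Or.inl (h.mono hs₂)
      · exact Or.inr (h.mono hs₂)

variable (M : Set ℕ)

/-- state of the first fusion. -/
structure GState where
  E : Finset ℕ
  L : Set ℕ
  hL : L.Infinite
  hLM : L ⊆ M
  hdec : ∀ a : Finset ℕ, a ⊆ E → (GAcc G L a ∨ GRej G L a)
  hlt : ∀ x ∈ E, ∀ y ∈ L, x < y

variable {G M}

noncomputable def gstep (S : GState G M) : GState G M :=
  let e := sInf S.L
  let h := exists_dec_finset G (S.hL.diff (Set.finite_Iic e)) ((insert e S.E).powerset)
  { E := insert e S.E
    L := h.choose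
    hL := h.choose_spec.2.1
    hLM := (h.choose_spec.1.trans Set.diff_subset).trans S.hLM
    hdec := fun a ha => h.choose_spec.2.2 a (Finset.mem_powerset.2 ha)
    hlt := by
      intro x hx y hy
      have hyL : y ∈ S.L \ Set.Iic (sInf S.L) := h.choose_spec.1 hy
      have hey : sInf S.L < y := by simpa using hyL.2
      rcases Finset.mem_insert.1 hx with rfl | hx
      · exact hey
      · exact lt_trans (S.hlt x hx (sInf S.L) (Nat.sInf_mem S.hL.nonempty)) hey }

lemma gstep_E (S : GState G M) : (gstep S).E = insert (sInf S.L) S.E := rfl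

lemma gstep_L_sub (S : GState G M) : (gstep S).L ⊆ S.L :=
  (exists_dec_finset G (S.hL.diff (Set.finite_Iic (sInf S.L)))
    ((insert (sInf S.L) S.E).powerset)).choose_spec.1.trans Set.diff_subset

lemma gstep_L_gt (S : GState G M) : ∀ y ∈ (gstep S).L, sInf S.L < y := by
  intro y hy
  have hyL : y ∈ S.L \ Set.Iic (sInf S.L) :=
    (exists_dec_finset G (S.hL.diff (Set.finite_Iic (sInf S.L)))
      ((insert (sInf S.L) S.E).powerset)).choose_spec.1 hy
  simpa using hyL.2

variable (G)

noncomputable def gbase (hM : M.Infinite) : GState G M :=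
  let h := exists_dec G hM (∅ : Finset ℕ)
  { E := ∅
    L := h.choose
    hL := h.choose_spec.2.1
    hLM := h.choose_spec.1
    hdec := fun a ha => by
      rw [Finset.subset_empty.1 ha]
      exact h.choose_spec.2.2
    hlt := by simp }

noncomputable def gseq (hM : M.Infinite) (n : ℕ) : GState G M := gstep^[n] (gbase G hM)

lemma gseq_succ (hM : M.Infinite) (n : ℕ) : gseq G hM (n + 1) = gstep (gseq G hM n) :=
  Function.iterate_succ_apply' _ _ _

/-- the diagonal sequence -/
noncomputable def eG (hM : M.Infinite) (n : ℕ) : ℕ := sInf (gseq G hM n).L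

variable (hM : M.Infinite)

lemma eG_mem (n : ℕ) : eG G hM n ∈ (gseq G hM n).L := Nat.sInf_mem (gseq G hM n).hL.nonempty

lemma gseq_L_antitone : ∀ ⦃m n : ℕ⦄, m ≤ n → (gseq G hM n).L ⊆ (gseq G hM m).L := by
  intro m n hmn
  induction n with
  | zero => rw [Nat.le_zero.1 hmn]
  | succ n ih =>
    by_cases h : m = n + 1
    · subst h; exact subset_rfl
    · have hmn' : m ≤ n := by omega
      have hsub : (gseq G hM (n + 1)).L ⊆ (gseq G hM n).L := by
        rw [gseq_succ]; exact gstep_L_sub _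
      exact hsub.trans (ih hmn')

lemma eG_lt_of_mem_succ {n : ℕ} {y : ℕ} (hy : y ∈ (gseq G hM (n + 1)).L) : eG G hM n < y := by
  rw [gseq_succ] at hy
  exact gstep_L_gt _ y hy

lemma eG_strictMono : StrictMono (eG G hM) := by
  apply strictMono_nat_of_lt_succ
  intro n
  exact eG_lt_of_mem_succ G hM (eG_mem G hM (n + 1))

lemma eG_mem_of_le {n m : ℕ} (h : n ≤ m) : eG G hM m ∈ (gseq G hM n).L :=
  gseq_L_antitone G hM h (eG_mem G hM m)

lemma gseq_E_eq (n : ℕ) : (gseq G hM n).E = (Finset.range n).image (eG G hM) := by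
  induction n with
  | zero => simp [gseq, gbase]
  | succ n ih =>
    have : (gseq G hM (n + 1)).E = insert (eG G hM n) (gseq G hM n).E := by
      rw [gseq_succ]; rfl
    rw [this, ih, Finset.range_add_one, Finset.image_insert]

/-- the diagonal set -/
noncomputable def LstarG : Set ℕ := Set.range (eG G hM)

lemma LstarG_infinite : (LstarG G hM).Infinite :=
  Set.infinite_range_of_injective (eG_strictMono G hM).injective

lemma LstarG_subset : LstarG G hM ⊆ M := by
  rintro x ⟨n, rfl⟩
  exact (gseq G hM n).hLM (eG_mem G hM n)

/-- `LstarG` decides all of its finite subsets. -/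
lemma decAll (a : Finset ℕ) (ha : ↑a ⊆ LstarG G hM) :
    GAcc G (LstarG G hM) a ∨ GRej G (LstarG G hM) a := by
  classical
  have hex : ∃ n, ∀ y ∈ a, y < eG G hM n := by
    refine ⟨a.sup id + 1, fun y hy => ?_⟩
    have h1 : y ≤ a.sup id := Finset.le_sup (f := id) hy
    have h2 : a.sup id + 1 ≤ eG G hM (a.sup id + 1) := (eG_strictMono G hM).le_apply
    omega
  set n₀ := Nat.find hex with hn₀def
  have hn₀ : ∀ y ∈ a, y < eG G hM n₀ := Nat.find_spec hex
  have haE : a ⊆ (gseq G hM n₀).E := by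
    intro y hy
    obtain ⟨j, hj⟩ := ha hy
    have hjn : j < n₀ := by
      by_contra hge
      push_neg at hge
      have := (eG_strictMono G hM).monotone hge
      have := hn₀ y hy
      omega
    rw [gseq_E_eq]
    exact Finset.mem_image.2 ⟨j, Finset.mem_range.2 hjn, hj⟩
  have hdec := (gseq G hM n₀).hdec a haE
  set T := LstarG G hM ∩ {x | ∀ y ∈ a, y < x} with hT
  have hTL : T ⊆ (gseq G hM n₀).L := by
    rintro x ⟨⟨m, rfl⟩, hx⟩
    have hm : n₀ ≤ m := by
      by_contra hlt
      push_neg at hlt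
      exact Nat.find_min hex hlt hx
    exact eG_mem_of_le G hM hm
  have hTsub : T ⊆ LstarG G hM := Set.inter_subset_left
  rcases hdec with hacc | hrej
  · left
    intro N hN hNi hNa
    have hNT : N ⊆ T := fun x hx => ⟨hN hx, fun y hy => hNa x hx y hy⟩
    exact hacc N (hNT.trans hTL) hNi hNa
  · right
    intro L'' hL'' hL''i hacc''
    set L''' := L'' ∩ {x | ∀ y ∈ a, y < x} with hL'''
    have hsub : L''' ⊆ (gseq G hM n₀).L := by
      refine Set.Subset.trans ?_ hTL
      rintro x ⟨hx1, hx2⟩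
      exact ⟨hL'' hx1, hx2⟩
    have hinf : L'''.Infinite := by
      refine (hL''i.diff (Set.finite_Iic (a.sup id))).mono ?_
      rintro x ⟨hx1, hx2⟩
      simp only [Set.mem_Iic] at hx2
      refine ⟨hx1, fun y hy => ?_⟩
      have : y ≤ a.sup id := Finset.le_sup (f := id) hy
      omega
    exact hrej L''' hsub hinf (hacc''.mono Set.inter_subset_left)

lemma key4 {a : Finset ℕ} (ha : ↑a ⊆ LstarG G hM) (hrej : GRej G (LstarG G hM) a) :
    {x | x ∈ LstarG G hM ∧ (∀ y ∈ a, y < x) ∧ ¬ GRej G (LstarG G hM) (insert x a)}.Finite := by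
  classical
  by_contra hfin
  replace hfin : {x | x ∈ LstarG G hM ∧ (∀ y ∈ a, y < x) ∧ ¬ GRej G (LstarG G hM) (insert x a)}.Infinite := hfin
  set S := {x | x ∈ LstarG G hM ∧ (∀ y ∈ a, y < x) ∧ ¬ GRej G (LstarG G hM) (insert x a)} with hS
  have hSL : S ⊆ LstarG G hM := fun x hx => hx.1
  refine hrej S hSL hfin ?_
  intro N hNS hNi hNa
  have hnN : sInf N ∈ N := Nat.sInf_mem hNi.nonempty
  set n := sInf N with hn
  have hnS : n ∈ S := hNS hnN
  have hacc : GAcc G (LstarG G hM) (insert n a) := by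
    have hsub : ↑(insert n a) ⊆ LstarG G hM := by
      rw [Finset.coe_insert]
      exact Set.insert_subset (hSL hnS) ha
    rcases decAll G hM (insert n a) hsub with h | h
    · exact h
    · exact absurd h hnS.2.2
  set N' := N ∩ {x | n < x} with hN'
  have hN'N : N' ⊆ N := Set.inter_subset_left
  have hN'sub : N' ⊆ LstarG G hM := hN'N.trans (hNS.trans hSL)
  have hN'inf : N'.Infinite := by
    refine (hNi.diff (Set.finite_Iic n)).mono ?_
    rintro x ⟨hx1, hx2⟩
    simp only [Set.mem_Iic] at hx2
    exact ⟨hx1, show n < x from lt_of_not_ge hx2⟩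
  have hN'a : ∀ x ∈ N', ∀ y ∈ insert n a, y < x := by
    rintro x ⟨hxN, hx⟩ y hy
    rcases Finset.mem_insert.1 hy with rfl | hy
    · exact hx
    · exact hNa x hxN y hy
  obtain ⟨t, hts, htG⟩ := hacc N' hN'sub hN'inf hN'a
  refine ⟨insert n t, ⟨?_, ?_⟩, ?_⟩
  · rw [Finset.coe_insert]
    exact Set.insert_subset hnN (hts.1.trans hN'N)
  · intro x hxN b hb hxb
    rcases Finset.mem_insert.1 hb with rfl | hbt
    · have h1 : n ≤ x := Nat.sInf_le hxN
      have : x = n := le_antisymm hxb h1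
      simp [this]
    · by_cases hxn : x ≤ n
      · have h1 : n ≤ x := Nat.sInf_le hxN
        have : x = n := le_antisymm hxn h1
        simp [this]
      · push_neg at hxn
        exact Finset.mem_insert.2 (Or.inr (hts.2 x ⟨hxN, hxn⟩ b hbt hxb))
  · have he : a ∪ insert n t = insert n a ∪ t := by
      ext z
      simp only [Finset.mem_union, Finset.mem_insert]
      tauto
    rw [he]
    exact htG

lemma step2ex (hrej0 : GRej G (LstarG G hM) ∅) (E : Finset ℕ) (hE : ↑E ⊆ LstarG G hM)
    (hrej : ∀ a ⊆ E, GRej G (LstarG G hM) a) :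
    ∃ x, x ∈ LstarG G hM ∧ x ∉ E ∧ ↑(insert x E) ⊆ LstarG G hM ∧
      ∀ a ⊆ insert x E, GRej G (LstarG G hM) a := by
  classical
  have hB : (⋃ a ∈ E.powerset,
      {x | x ∈ LstarG G hM ∧ (∀ y ∈ a, y < x) ∧ ¬ GRej G (LstarG G hM) (insert x a)}).Finite := by
    refine Set.Finite.biUnion (E.powerset.finite_toSet) ?_
    intro a ha
    have haE : a ⊆ E := Finset.mem_powerset.1 ha
    exact key4 G hM ((Finset.coe_subset.2 haE).trans hE) (hrej a haE)
  have hfin : (Set.Iic (E.sup id) ∪ ⋃ a ∈ E.powerset,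
      {x | x ∈ LstarG G hM ∧ (∀ y ∈ a, y < x) ∧ ¬ GRej G (LstarG G hM) (insert x a)}).Finite :=
    (Set.finite_Iic _).union hB
  obtain ⟨x, hxL, hxn⟩ := ((LstarG_infinite G hM).diff hfin).nonempty
  rw [Set.mem_union] at hxn
  push_neg at hxn
  have hxsup : E.sup id < x := by
    have := hxn.1
    simp only [Set.mem_Iic] at this
    omega
  have hxE : ∀ y ∈ E, y < x := fun y hy =>
    lt_of_le_of_lt (Finset.le_sup (f := id) hy) hxsup
  have hxnotE : x ∉ E := fun h => lt_irrefl x (hxE x h)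
  refine ⟨x, hxL, hxnotE, ?_, ?_⟩
  · rw [Finset.coe_insert]
    exact Set.insert_subset hxL hE
  · intro a haI
    by_cases hxa : x ∈ a
    · have ha' : a.erase x ⊆ E := by
        intro z hz
        have hz1 := Finset.mem_erase.1 hz
        exact (Finset.mem_insert.1 (haI hz1.2)).resolve_left hz1.1
      have hx2 : x ∉ ⋃ b ∈ E.powerset,
          {x | x ∈ LstarG G hM ∧ (∀ y ∈ b, y < x) ∧ ¬ GRej G (LstarG G hM) (insert x b)} := hxn.2
      simp only [Set.mem_iUnion, Set.mem_setOf_eq, not_exists] at hx2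
      have := hx2 (a.erase x)
      have hrej' : GRej G (LstarG G hM) (insert x (a.erase x)) := by
        by_contra hc
        exact this (Finset.mem_powerset.2 ha') ⟨hxL, fun y hy => hxE y (ha' hy), hc⟩
      rwa [Finset.insert_erase hxa] at hrej'
    · refine hrej a ?_
      intro z hz
      exact (Finset.mem_insert.1 (haI hz)).resolve_left (by rintro rfl; exact hxa hz)

noncomputable def rseq (hrej0 : GRej G (LstarG G hM) ∅) :
    ℕ → {E : Finset ℕ // ↑E ⊆ LstarG G hM ∧ ∀ a ⊆ E, GRej G (LstarG G hM) a}
  | 0 => ⟨∅, by simp, fun a ha => by rw [Finset.subset_empty.1 ha]; exact hrej0⟩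
  | n + 1 =>
      let S := rseq hrej0 n
      let h := step2ex G hM hrej0 S.1 S.2.1 S.2.2
      ⟨insert h.choose S.1, h.choose_spec.2.2.1, h.choose_spec.2.2.2⟩

lemma rseq_card (hrej0 : GRej G (LstarG G hM) ∅) (n : ℕ) :
    (rseq G hM hrej0 n).1.card = n := by
  induction n with
  | zero => simp [rseq]
  | succ n ih =>
    show (insert _ (rseq G hM hrej0 n).1).card = n + 1
    rw [Finset.card_insert_of_notMem
      (step2ex G hM hrej0 (rseq G hM hrej0 n).1 (rseq G hM hrej0 n).2.1
        (rseq G hM hrej0 n).2.2).choose_spec.2.1, ih]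

lemma rseq_mono (hrej0 : GRej G (LstarG G hM) ∅) : ∀ {m n : ℕ}, m ≤ n →
    (rseq G hM hrej0 m).1 ⊆ (rseq G hM hrej0 n).1 := by
  intro m n hmn
  induction n with
  | zero => rw [Nat.le_zero.1 hmn]
  | succ n ih =>
    by_cases h : m = n + 1
    · subst h; exact subset_rfl
    · have hmn' : m ≤ n := by omega
      refine (ih hmn').trans ?_
      show (rseq G hM hrej0 n).1 ⊆ insert _ (rseq G hM hrej0 n).1
      exact Finset.subset_insert _ _

theorem galvin (G : Set (Finset ℕ)) {M : Set ℕ} (hM : M.Infinite) :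
    ∃ L, L ⊆ M ∧ L.Infinite ∧
      ((∀ N : Set ℕ, N ⊆ L → N.Infinite → ∃ t ∈ G, InitSegOfInf t N) ∨
        (∀ t ∈ G, ¬ (↑t : Set ℕ) ⊆ L)) := by
  classical
  rcases decAll G hM ∅ (by simp) with hacc | hrej
  · refine ⟨LstarG G hM, LstarG_subset G hM, LstarG_infinite G hM, Or.inl ?_⟩
    intro N hN hNi
    obtain ⟨t, ht1, ht2⟩ := hacc N hN hNi (by simp)
    exact ⟨t, by simpa using ht2, ht1⟩
  · set L' := ⋃ n, ((rseq G hM hrej n).1 : Set ℕ) with hL'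
    have hL'sub : L' ⊆ LstarG G hM := by
      rintro x hx
      rw [hL', Set.mem_iUnion] at hx
      obtain ⟨n, hn⟩ := hx
      exact (rseq G hM hrej n).2.1 hn
    have hstage : ∀ a : Finset ℕ, ↑a ⊆ L' → ∃ n, a ⊆ (rseq G hM hrej n).1 := by
      intro a
      induction a using Finset.induction_on with
      | empty => exact fun _ => ⟨0, by simp⟩
      | @insert y a hy ih =>
        intro hsub
        rw [Finset.coe_insert, Set.insert_subset_iff] at hsub
        obtain ⟨n₁, hn₁⟩ := ih hsub.2
        have hyL : y ∈ L' := hsub.1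
        rw [hL', Set.mem_iUnion] at hyL
        obtain ⟨n₂, hn₂⟩ := hyL
        refine ⟨max n₁ n₂, Finset.insert_subset ?_ ?_⟩
        · exact rseq_mono G hM hrej (le_max_right n₁ n₂) hn₂
        · exact hn₁.trans (rseq_mono G hM hrej (le_max_left n₁ n₂))
    have hL'inf : L'.Infinite := by
      by_contra hfin
      rw [Set.not_infinite] at hfin
      set k := hfin.toFinset.card with hk
      have hsub : (rseq G hM hrej (k + 1)).1 ⊆ hfin.toFinset := by
        intro x hx
        rw [Set.Finite.mem_toFinset]
        rw [hL', Set.mem_iUnion]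
        exact ⟨k + 1, hx⟩
      have := Finset.card_le_card hsub
      rw [rseq_card] at this
      omega
    refine ⟨L', hL'sub.trans (LstarG_subset G hM), hL'inf, Or.inr ?_⟩
    intro t ht htL
    obtain ⟨n, hn⟩ := hstage t htL
    exact not_grej_self ht (LstarG_infinite G hM) ((rseq G hM hrej n).2.2 t hn)

end Galvin

/-! ### plegma machinery -/

section MainDefs
open scoped Classical

def ValidSeg (l : ℕ) (t : Finset ℕ) (i c : ℕ) : Prop := ∀ k < c, i + k * l < t.card

def segF (l : ℕ) (t : Finset ℕ) (i c : ℕ) : Finset ℕ := mkSeg (fun k => elt t (i + k * l)) c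

def Decides (F : Set (Finset ℕ)) (l : ℕ) (t : Finset ℕ) : Prop :=
  ∀ i < l, ∃ c, ValidSeg l t i c ∧ segF l t i c ∈ F

lemma smo_seg {l : ℕ} (hl : 0 < l) {t : Finset ℕ} {i c : ℕ} (hv : ValidSeg l t i c) :
    SMO (fun k => elt t (i + k * l)) c := by
  intro a b hab hb
  exact elt_strictMono (by have := Nat.mul_lt_mul_of_pos_right hab hl; omega) (hv b hb)

noncomputable def cOf (F : Set (Finset ℕ)) (l : ℕ) (t : Finset ℕ) (i : ℕ) : ℕ :=
  if h : ∃ c, ValidSeg l t i c ∧ segF l t i c ∈ F then h.choose else 0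

lemma cOf_spec {F : Set (Finset ℕ)} {l : ℕ} {t : Finset ℕ} {i : ℕ}
    (hd : Decides F l t) (hi : i < l) :
    ValidSeg l t i (cOf F l t i) ∧ segF l t i (cOf F l t i) ∈ F := by
  rw [cOf, dif_pos (hd i hi)]
  exact (hd i hi).choose_spec

noncomputable def tupleOf (F : Set (Finset ℕ)) (l : ℕ) (t : Finset ℕ) : Fin l → Finset ℕ :=
  fun i => segF l t i (cOf F l t i)

variable {p : ℕ} {l : ℕ}

noncomputable def colorOf (hp : 1 ≤ p) (P : Fin p → Set (Fin l → Finset ℕ))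
    (F : Set (Finset ℕ)) (t : Finset ℕ) : Fin p :=
  if h : ∃ j : Fin p, tupleOf F l t ∈ P j then h.choose else ⟨0, hp⟩

lemma colorOf_spec {hp : 1 ≤ p} {P : Fin p → Set (Fin l → Finset ℕ)}
    {F : Set (Finset ℕ)} {t : Finset ℕ} (h : ∃ j : Fin p, tupleOf F l t ∈ P j) :
    tupleOf F l t ∈ P (colorOf hp P F t) := by
  rw [colorOf, dif_pos h]
  exact h.choose_spec

lemma cOf_pos {F : Set (Finset ℕ)} {l : ℕ} {t : Finset ℕ} {i : ℕ}
    (hd : Decides F l t) (hi : i < l) (h0 : ∅ ∉ F) : 0 < cOf F l t i := by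
  rcases Nat.eq_zero_or_pos (cOf F l t i) with h | h
  · exfalso
    have := (cOf_spec hd hi).2
    rw [h] at this
    simpa [segF, mkSeg] using (h0 this)
  · exact h

lemma card_tupleOf {F : Set (Finset ℕ)} {t : Finset ℕ} (hl : 0 < l)
    (hd : Decides F l t) (i : Fin l) :
    (tupleOf F l t i).card = cOf F l t i := by
  exact card_mkSeg (smo_seg hl (cOf_spec hd i.2).1)

lemma elt_tupleOf {F : Set (Finset ℕ)} {t : Finset ℕ} (hl : 0 < l)
    (hd : Decides F l t) (i : Fin l) {k : ℕ} (hk : k < cOf F l t i) :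
    elt (tupleOf F l t i) k = elt t (i + k * l) :=
  elt_mkSeg (smo_seg hl (cOf_spec hd i.2).1) hk

/-- the canonical tuple of a deciding set is a plegma tuple in `F↾M`. -/
lemma tupleOf_mem_Plm (hl : 0 < l) {F : Set (Finset ℕ)} (h0 : ∅ ∉ F) {M : Set ℕ}
    {t : Finset ℕ} (hd : Decides F l t) (htM : ↑t ⊆ M) :
    tupleOf F l t ∈ Plm l (restrict F M) := by
  have hval : ∀ i : Fin l, ValidSeg l t i (cOf F l t i) := fun i => (cOf_spec hd i.2).1
  constructor
  · refine ⟨?_, ?_, ?_⟩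
    · intro i
      rw [← Finset.card_pos, card_tupleOf hl hd]
      exact cOf_pos hd i.2 h0
    · intro i j hij k hki hkj
      rw [card_tupleOf hl hd] at hki hkj
      rw [elt_tupleOf hl hd i hki, elt_tupleOf hl hd j hkj]
      exact elt_strictMono (by have := Fin.lt_iff_val_lt_val.1 hij; omega) (hval j k hkj)
    · intro i j k hki hkj
      rw [card_tupleOf hl hd] at hki hkj
      rw [elt_tupleOf hl hd i hki, elt_tupleOf hl hd j hkj]
      have hi : (i : ℕ) < l := i.2
      have hkl : (k + 1) * l = k * l + l := by ring
      exact elt_strictMono (by omega) (hval j (k + 1) hkj)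
  · intro i
    refine ⟨(cOf_spec hd i.2).2, ?_⟩
    intro x hx
    rw [Finset.mem_coe] at hx
    rw [tupleOf] at hx
    rw [segF, mem_mkSeg] at hx
    obtain ⟨k, hk, rfl⟩ := hx
    exact htM (elt_mem (hval i k hk))

/-- existence of a deciding initial segment, from very-largeness. -/
lemma exists_decides {F : Set (Finset ℕ)} (hl : 0 < l) {L N : Set ℕ} (hNL : N ⊆ L)
    (hNi : N.Infinite)
    (hVL : ∀ N' : Set ℕ, N' ⊆ L → N'.Infinite → ∃ s ∈ F, InitSegOfInf s N') :
    ∃ t : Finset ℕ, InitSegOfInf t N ∧ Decides F l t := by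
  classical
  set f := Nat.nth (· ∈ N) with hf
  have hNset : {x | x ∈ N} = N := Set.setOf_mem_eq
  have hfs : StrictMono f := Nat.nth_strictMono (by rwa [hNset])
  have hrange : Set.range f = N := by
    rw [hf, Nat.range_nth_of_infinite (by rwa [hNset]), hNset]
  have hex : ∀ i, i < l → ∃ c, mkSeg (fun k => f (i + k * l)) c ∈ F := by
    intro i hi
    set fi := fun k => f (i + k * l) with hfi
    have hfis : StrictMono fi := fun a b hab =>
      hfs (by have := Nat.mul_lt_mul_of_pos_right hab hl; omega)
    have hNi' : (Set.range fi).Infinite := Set.infinite_range_of_injective hfis.injective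
    have hNsub : Set.range fi ⊆ N := by
      rintro x ⟨k, rfl⟩
      rw [← hrange]
      exact ⟨i + k * l, rfl⟩
    obtain ⟨si, hsiF, hsii⟩ := hVL (Set.range fi) (hNsub.trans hNL) hNi'
    refine ⟨si.card, ?_⟩
    rw [← initSegOfInf_eq hfis hsii]
    exact hsiF
  set c : ℕ → ℕ := fun i => if hi : i < l then (hex i hi).choose else 0 with hc
  set C := (Finset.range l).sup c + 1 with hC
  set m := l * C with hm
  refine ⟨mkSeg f m, ?_, ?_⟩
  · rw [← hrange]
    exact initSegOfInf_mkSeg hfs m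
  · intro i hi
    have hcm : (mkSeg f m).card = m := card_mkSeg (strictMono_smo hfs m)
    have hci : c i ≤ (Finset.range l).sup c := Finset.le_sup (Finset.mem_range.2 hi)
    have hvalid : ValidSeg l (mkSeg f m) i (c i) := by
      intro k hk
      rw [hcm, hm]
      have : k < C := by omega
      have h2 : i + k * l + 1 ≤ l + k * l := by omega
      have h3 : l + k * l ≤ l * C := by
        have : k + 1 ≤ C := this
        calc l + k * l = l * (k + 1) := by ring
        _ ≤ l * C := Nat.mul_le_mul_left l this
      omega
    refine ⟨c i, hvalid, ?_⟩
    have hseg : segF l (mkSeg f m) i (c i) = mkSeg (fun k => f (i + k * l)) (c i) := by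
      rw [segF, mkSeg, mkSeg]
      apply Finset.image_congr
      intro k hk
      rw [Finset.coe_range, Set.mem_Iio] at hk
      exact elt_mkSeg (strictMono_smo hfs m) (by have := hvalid k hk; rwa [hcm] at this)
    rw [hseg]
    have : c i = (hex i hi).choose := by rw [hc]; simp [hi]
    rw [this]
    exact (hex i hi).choose_spec

/-! ### the interleaving construction -/

end MainDefs

section Interleave
open scoped Classical

variable (l : ℕ) (hl : 0 < l) (s : Fin l → Finset ℕ) (u : ℕ → ℕ)

def DefinedT (q : ℕ) : Prop := q / l < (s ⟨q % l, Nat.mod_lt q hl⟩).card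

noncomputable def valT (q : ℕ) : ℕ := elt (s ⟨q % l, Nat.mod_lt q hl⟩) (q / l)

open scoped Classical in
noncomputable def idxT (q : ℕ) : ℕ :=
  (if h : ∃ a, u (a * l) = valT l hl s q then h.choose else 0) * l

open scoped Classical in
noncomputable def gT : ℕ → ℕ
  | 0 => idxT l hl s u 0
  | q + 1 => if DefinedT l hl s (q + 1) then idxT l hl s u (q + 1) else gT q + 1

lemma idxT_spec {q : ℕ} (h : ∃ a, u (a * l) = valT l hl s q) :
    u (idxT l hl s u q) = valT l hl s q := by
  classical
  rw [idxT, dif_pos h]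
  exact h.choose_spec

lemma idxT_mul (q : ℕ) : ∃ a, idxT l hl s u q = a * l := ⟨_, rfl⟩

lemma gT_zero : gT l hl s u 0 = idxT l hl s u 0 := rfl

lemma gT_succ (q : ℕ) : gT l hl s u (q + 1) =
    if DefinedT l hl s (q + 1) then idxT l hl s u (q + 1) else gT l hl s u q + 1 := by
  classical
  rfl

lemma gT_defined : ∀ {q : ℕ}, DefinedT l hl s q → gT l hl s u q = idxT l hl s u q := by
  intro q hq
  cases q with
  | zero => rfl
  | succ q => rw [gT_succ, if_pos hq]

lemma definedT_zero (hne : ∀ i : Fin l, 0 < (s i).card) : DefinedT l hl s 0 := by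
  show 0 / l < _
  rw [Nat.zero_div]
  exact hne _

lemma gT_inv (hne : ∀ i : Fin l, 0 < (s i).card) (q : ℕ) :
    ∃ q₀, q₀ ≤ q ∧ DefinedT l hl s q₀ ∧ (∀ r, q₀ < r → r ≤ q → ¬ DefinedT l hl s r) ∧
      gT l hl s u q = idxT l hl s u q₀ + (q - q₀) := by
  induction q with
  | zero =>
    exact ⟨0, le_rfl, definedT_zero l hl s hne, fun r h1 h2 => absurd h1 (by omega), by
      rw [gT_zero]; omega⟩
  | succ q ih =>
    by_cases hd : DefinedT l hl s (q + 1)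
    · exact ⟨q + 1, le_rfl, hd, fun r h1 h2 => absurd h1 (by omega), by
        rw [gT_succ, if_pos hd]; omega⟩
    · obtain ⟨q₀, h1, h2, h3, h4⟩ := ih
      refine ⟨q₀, h1.trans (Nat.le_succ q), h2, ?_, ?_⟩
      · intro r hr1 hr2
        rcases eq_or_lt_of_le hr2 with rfl | h
        · exact hd
        · exact h3 r hr1 (by omega)
      · rw [gT_succ, if_neg hd, h4]
        omega

lemma gapT (hne : ∀ i : Fin l, 0 < (s i).card) {q : ℕ} (hd : DefinedT l hl s (q + 1)) :
    ∃ q₁, q₁ ≤ q ∧ DefinedT l hl s q₁ ∧ q + 1 - q₁ ≤ l := by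
  by_cases hk : (q + 1) / l = 0
  · have hql : q + 1 < l := (Nat.div_eq_zero_iff.1 hk).resolve_left hl.ne'
    have hql : q + 1 < l := (Nat.div_eq_zero_iff.1 hk).resolve_left hl.ne'
    refine ⟨q, le_rfl, ?_, by omega⟩
    show q / l < _
    rw [Nat.div_eq_of_lt (by omega)]
    exact hne _
  · have hge : l ≤ q + 1 := by
      by_contra h
      push_neg at h
      exact hk (Nat.div_eq_of_lt h)
    set a := q + 1 - l with ha
    have hq1 : q + 1 = a + l := by omega
    refine ⟨a, by omega, ?_, by omega⟩
    show a / l < _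
    have hfin : (⟨a % l, Nat.mod_lt a hl⟩ : Fin l) = ⟨(q + 1) % l, Nat.mod_lt _ hl⟩ := by
      apply Fin.ext
      show a % l = (q + 1) % l
      rw [hq1, Nat.add_mod_right]
    have hdiv : (q + 1) / l = a / l + 1 := by
      rw [hq1, Nat.add_div_right _ hl]
    rw [hfin]
    have hd' : (q + 1) / l < (s ⟨(q + 1) % l, Nat.mod_lt _ hl⟩).card := hd
    omega

lemma valT_mono (hpleg : IsPlegma s) {q q' : ℕ} (hdq : DefinedT l hl s q)
    (hdq' : DefinedT l hl s q') (hlt : q < q') (hle : q' ≤ q + l) :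
    valT l hl s q < valT l hl s q' := by
  have e1 : l * (q / l) + q % l = q := Nat.div_add_mod q l
  have e2 : l * (q' / l) + q' % l = q' := Nat.div_add_mod q' l
  have hi : q % l < l := Nat.mod_lt q hl
  have hi' : q' % l < l := Nat.mod_lt q' hl
  have hdle : q / l ≤ q' / l := Nat.div_le_div_right hlt.le
  have hdle2 : q' / l ≤ q / l + 1 := by
    have h1 : q' / l ≤ (q + l) / l := Nat.div_le_div_right hle
    rwa [Nat.add_div_right _ hl] at h1
  have hdq2 : q / l < (s ⟨q % l, Nat.mod_lt q hl⟩).card := hdq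
  have hdq'2 : q' / l < (s ⟨q' % l, Nat.mod_lt q' hl⟩).card := hdq'
  rcases eq_or_lt_of_le hdle with heq | hlt2
  · -- same k, then q % l < q' % l
    have hmod : q % l < q' % l := by
      rw [← heq] at e2
      omega
    have hfinlt : (⟨q % l, Nat.mod_lt q hl⟩ : Fin l) < ⟨q' % l, Nat.mod_lt q' hl⟩ := hmod
    have := hpleg.2.1 _ _ hfinlt (q / l) hdq2 (by rw [heq]; exact hdq'2)
    show elt (s ⟨q % l, Nat.mod_lt q hl⟩) (q / l) <
      elt (s ⟨q' % l, Nat.mod_lt q' hl⟩) (q' / l)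
    rw [← heq]
    exact this
  · -- k' = k + 1
    have hk1 : q' / l = q / l + 1 := by omega
    have := hpleg.2.2 ⟨q % l, Nat.mod_lt q hl⟩ ⟨q' % l, Nat.mod_lt q' hl⟩ (q / l) hdq2
      (by rw [← hk1]; exact hdq'2)
    show elt (s ⟨q % l, Nat.mod_lt q hl⟩) (q / l) <
      elt (s ⟨q' % l, Nat.mod_lt q' hl⟩) (q' / l)
    rw [hk1]
    exact this

lemma gT_strictMono (hu : StrictMono u) (hpleg : IsPlegma s)
    (hne : ∀ i : Fin l, 0 < (s i).card)
    (hEx : ∀ q, DefinedT l hl s q → ∃ a, u (a * l) = valT l hl s q) :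
    StrictMono (gT l hl s u) := by
  apply strictMono_nat_of_lt_succ
  intro q
  by_cases hd : DefinedT l hl s (q + 1)
  · obtain ⟨q₀, hq₀le, hq₀d, hq₀max, hg⟩ := gT_inv l hl s u hne q
    obtain ⟨q₁, hq₁le, hq₁d, hq₁gap⟩ := gapT l hl s hne hd
    have hq₀₁ : q₁ ≤ q₀ := by
      by_contra h
      push_neg at h
      exact hq₀max q₁ h hq₁le hq₁d
    have hvm : valT l hl s q₀ < valT l hl s (q + 1) :=
      valT_mono l hl s hpleg hq₀d hd (by omega) (by omega)
    have hu₀ := idxT_spec l hl s u (hEx q₀ hq₀d)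
    have hu₁ := idxT_spec l hl s u (hEx (q + 1) hd)
    have hidx : idxT l hl s u q₀ < idxT l hl s u (q + 1) := by
      have h2 : u (idxT l hl s u q₀) < u (idxT l hl s u (q + 1)) := by
        rw [hu₀, hu₁]; exact hvm
      exact hu.lt_iff_lt.1 h2
    have hstep : idxT l hl s u q₀ + l ≤ idxT l hl s u (q + 1) := by
      obtain ⟨a₀, ha₀⟩ := idxT_mul l hl s u q₀
      obtain ⟨a₁, ha₁⟩ := idxT_mul l hl s u (q + 1)
      rw [ha₀, ha₁] at hidx ⊢
      have haa : a₀ < a₁ := by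
        by_contra h
        push_neg at h
        exact absurd hidx (not_lt.2 (Nat.mul_le_mul_right l h))
      calc a₀ * l + l = (a₀ + 1) * l := by ring
        _ ≤ a₁ * l := Nat.mul_le_mul_right l haa
    have hgq1 : gT l hl s u (q + 1) = idxT l hl s u (q + 1) := gT_defined l hl s u hd
    omega
  · rw [gT_succ, if_neg hd]
    omega

end Interleave

section Homog

variable {l p : ℕ}

lemma homog (hl : 0 < l) {F : Set (Finset ℕ)} (hThin : Thin F) (h0 : ∅ ∉ F)
    {hp : 1 ≤ p} {P : Fin p → Set (Fin l → Finset ℕ)} {M L : Set ℕ} (hLM : L ⊆ M)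
    (hLi : L.Infinite) (j : Fin p)
    (hAcc : ∀ N : Set ℕ, N ⊆ L → N.Infinite →
      ∃ t, (Decides F l t ∧ colorOf hp P F t = j) ∧ InitSegOfInf t N)
    (hsub : Plm l (restrict F M) ⊆ ⋃ i, P i) :
    ∃ L', L' ⊆ M ∧ L'.Infinite ∧ Plm l (restrict F L') ⊆ P j := by
  classical
  set u := Nat.nth (· ∈ L) with hu
  have hLset : {x | x ∈ L} = L := Set.setOf_mem_eq
  have hus : StrictMono u := Nat.nth_strictMono (by rwa [hLset])
  have humem : ∀ k, u k ∈ L := fun k => Nat.nth_mem_of_infinite (by rwa [hLset]) k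
  set L' := Set.range (fun a => u (a * l)) with hL'
  have hL'L : L' ⊆ L := by rintro x ⟨a, rfl⟩; exact humem _
  have hL'i : L'.Infinite := Set.infinite_range_of_injective
    (fun a b hab => by
      have h2 := hus.injective hab
      exact Nat.eq_of_mul_eq_mul_right hl h2)
  refine ⟨L', hL'L.trans hLM, hL'i, ?_⟩
  rintro s ⟨hpleg, hmem⟩
  have hne : ∀ i : Fin l, 0 < (s i).card := fun i => Finset.card_pos.2 (hpleg.1 i)
  have hEx : ∀ q, DefinedT l hl s q → ∃ a, u (a * l) = valT l hl s q := by
    intro q hq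
    have hv : valT l hl s q ∈ s ⟨q % l, Nat.mod_lt q hl⟩ := elt_mem hq
    have hvL : valT l hl s q ∈ L' := (hmem _).2 hv
    obtain ⟨a, ha⟩ := hvL
    exact ⟨a, ha⟩
  have hg := gT_strictMono l hl s u hus hpleg hne hEx
  set f := fun q => u (gT l hl s u q) with hf
  have hfs : StrictMono f := hus.comp hg
  set N := Set.range f with hN
  have hNL : N ⊆ L := by rintro x ⟨q, rfl⟩; exact humem _
  have hNi : N.Infinite := Set.infinite_range_of_injective hfs.injective
  obtain ⟨t, ⟨hdec, hcol⟩, hinit⟩ := hAcc N hNL hNi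
  have htm : t = mkSeg f t.card := initSegOfInf_eq hfs (hN ▸ hinit)
  have helt : ∀ q, q < t.card → elt t q = f q := by
    intro q hq
    have h1 : elt t q = elt (mkSeg f t.card) q := by rw [← htm]
    rw [h1, elt_mkSeg (strictMono_smo hfs t.card) hq]
  have hfval : ∀ q, DefinedT l hl s q → f q = valT l hl s q := by
    intro q hq
    show u (gT l hl s u q) = _
    rw [gT_defined l hl s u hq]
    exact idxT_spec l hl s u (hEx q hq)
  have htup : tupleOf F l t = s := by
    funext i
    set ci := cOf F l t i with hci
    have hspec := cOf_spec hdec i.2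
    set v := fun k => f (i.val + k * l) with hv
    have hvs : StrictMono v := fun a b hab =>
      hfs (by have := Nat.mul_lt_mul_of_pos_right hab hl; omega)
    have hdefpos : ∀ k, k < (s i).card →
        DefinedT l hl s (i.val + k * l) ∧ valT l hl s (i.val + k * l) = elt (s i) k := by
      intro k hk
      have hmod : (i.val + k * l) % l = i.val := by
        rw [Nat.add_mul_mod_self_right, Nat.mod_eq_of_lt i.2]
      have hdiv : (i.val + k * l) / l = k := by
        rw [Nat.add_mul_div_right _ _ hl, Nat.div_eq_of_lt i.2]
        omega
      have hfin : (⟨(i.val + k * l) % l, Nat.mod_lt _ hl⟩ : Fin l) = i := Fin.ext hmod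
      constructor
      · show (i.val + k * l) / l < _
        rw [hdiv, hfin]
        exact hk
      · show elt (s ⟨(i.val + k * l) % l, Nat.mod_lt _ hl⟩) ((i.val + k * l) / l) = _
        rw [hdiv, hfin]
    have hsi : s i = mkSeg v (s i).card := by
      conv_lhs => rw [eq_mkSeg_self (s i)]
      unfold mkSeg
      apply Finset.image_congr
      intro k hk
      rw [Finset.coe_range, Set.mem_Iio] at hk
      obtain ⟨hd1, hd2⟩ := hdefpos k hk
      show elt (s i) k = f (i.val + k * l)
      rw [hfval _ hd1, hd2]
    have hseg : segF l t i ci = mkSeg v ci := by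
      unfold segF mkSeg
      apply Finset.image_congr
      intro k hk
      rw [Finset.coe_range, Set.mem_Iio] at hk
      exact helt _ (hspec.1 k hk)
    have hF1 : mkSeg v ci ∈ F := hseg ▸ hspec.2
    have hF2 : mkSeg v (s i).card ∈ F := hsi ▸ (hmem i).1
    have hcc : ci = (s i).card := thin_unique hThin (strictMono_smo hvs _) hF1 hF2
    show segF l t i ci = s i
    rw [hseg, hcc, ← hsi]
  have htM : ↑t ⊆ M := hinit.1.trans (hNL.trans hLM)
  have hplm : tupleOf F l t ∈ Plm l (restrict F M) := tupleOf_mem_Plm hl h0 hdec htM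
  have hUn := hsub hplm
  rw [Set.mem_iUnion] at hUn
  have hcs := colorOf_spec (hp := hp) hUn
  rw [hcol] at hcs
  rwa [htup] at hcs

end Homog

theorem plegma_ramsey_aux (F : Set (Finset ℕ)) (hThin : Thin F)
    (M : Set ℕ) (hM : M.Infinite) (l p : ℕ) (hp : 1 ≤ p)
    (P : Fin p → Set (Fin l → Finset ℕ))
    (hcover : Plm l (restrict F M) = ⋃ i, P i) :
    ∃ L : Set ℕ, L ⊆ M ∧ L.Infinite ∧ ∃ i₀ : Fin p, Plm l (restrict F L) ⊆ P i₀ := by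
  classical
  rcases Nat.eq_zero_or_pos l with rfl | hl
  · have hx : (fun i : Fin 0 => i.elim0) ∈ Plm 0 (restrict F M) :=
      ⟨⟨fun i => i.elim0, fun i => i.elim0, fun i => i.elim0⟩, fun i => i.elim0⟩
    rw [hcover, Set.mem_iUnion] at hx
    obtain ⟨j, hj⟩ := hx
    refine ⟨M, subset_rfl, hM, j, ?_⟩
    intro s hs
    have hse : s = fun i : Fin 0 => i.elim0 := funext fun i => i.elim0
    rwa [hse]
  by_cases h0 : ∅ ∈ F
  · refine ⟨M, subset_rfl, hM, ⟨0, hp⟩, ?_⟩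
    rintro s ⟨hpleg, hmem⟩
    exfalso
    have h1 : s ⟨0, hl⟩ ∈ F := (hmem ⟨0, hl⟩).1
    have h2 : (s ⟨0, hl⟩).Nonempty := hpleg.1 _
    refine hThin _ h1 ∅ h0 ⟨⟨Finset.empty_subset _,
      fun a _ b hb => absurd hb (Finset.notMem_empty b)⟩, ?_⟩
    intro he
    rw [← he] at h2
    simp at h2
  obtain ⟨L₀, hL₀M, hL₀i, hcase⟩ := galvin F hM
  rcases hcase with hVL | hrej
  · have hsub : Plm l (restrict F M) ⊆ ⋃ i, P i := hcover ▸ subset_rfl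
    have main : ∀ k : ℕ, k ≤ p →
        (∃ L, L ⊆ M ∧ L.Infinite ∧ ∃ i₀ : Fin p, Plm l (restrict F L) ⊆ P i₀) ∨
        (∃ L, L ⊆ L₀ ∧ L.Infinite ∧ ∀ j : Fin p, (j : ℕ) < k →
          ∀ t : Finset ℕ, (Decides F l t ∧ colorOf hp P F t = j) → ¬ (↑t : Set ℕ) ⊆ L) := by
      intro k
      induction k with
      | zero => exact fun _ => Or.inr ⟨L₀, subset_rfl, hL₀i, fun j hj => absurd hj (by omega)⟩
      | succ k ih =>
        intro hk1
        rcases ih (by omega) with hdone | ⟨L, hLL₀, hLi, hrejs⟩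
        · exact Or.inl hdone
        · set G : Set (Finset ℕ) :=
            {t | Decides F l t ∧ colorOf hp P F t = ⟨k, by omega⟩} with hG
          obtain ⟨L₁, hL₁L, hL₁i, hc⟩ := galvin G hLi
          rcases hc with hacc | hrej1
          · left
            obtain ⟨L', h1, h2, h3⟩ := homog hl hThin h0 ((hL₁L.trans hLL₀).trans hL₀M)
              hL₁i ⟨k, by omega⟩
              (fun N hN hNi => by obtain ⟨t, ht, hts⟩ := hacc N hN hNi; exact ⟨t, ht, hts⟩)
              hsub
            exact ⟨L', h1, h2, ⟨k, by omega⟩, h3⟩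
          · right
            refine ⟨L₁, hL₁L.trans hLL₀, hL₁i, ?_⟩
            intro j hj t htp htL
            rcases Nat.lt_succ_iff_lt_or_eq.1 hj with hjk | hjk
            · exact hrejs j hjk t htp (htL.trans hL₁L)
            · have hjeq : j = ⟨k, by omega⟩ := Fin.ext hjk
              refine hrej1 t ?_ htL
              rw [hG]
              exact ⟨htp.1, by rw [← hjeq]; exact htp.2⟩
    rcases main p le_rfl with hdone | ⟨L, hLL₀, hLi, hrejs⟩
    · exact hdone
    · exfalso
      obtain ⟨t, hinit, hdec⟩ := exists_decides hl hLL₀ hLi hVL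
      exact hrejs (colorOf hp P F t) (colorOf hp P F t).2 t ⟨hdec, rfl⟩ hinit.1
  · refine ⟨L₀, hL₀M, hL₀i, ⟨0, hp⟩, ?_⟩
    rintro s ⟨hpleg, hmem⟩
    exfalso
    exact hrej (s ⟨0, hl⟩) (hmem ⟨0, hl⟩).1 (hmem ⟨0, hl⟩).2

end PR

/-- (Ramsey property of plegma families.) If `F` is regular thin,
`M` is infinite and `Plm_l(F↾M) = P₁ ∪ … ∪ P_p`, then there are an infinite `L ⊆ M` and `i₀`
with `Plm_l(F↾L) ⊆ P_{i₀}`. -/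
theorem plegma_ramsey (F : Set (Finset ℕ)) (hF : RegularThin F)
    (M : Set ℕ) (hM : M.Infinite) (l p : ℕ) (hp : 1 ≤ p)
    (P : Fin p → Set (Fin l → Finset ℕ))
    (hcover : Plm l (restrict F M) = ⋃ i, P i) :
    ∃ L : Set ℕ, L ⊆ M ∧ L.Infinite ∧ ∃ i₀ : Fin p, Plm l (restrict F L) ⊆ P i₀ :=
  PR.plegma_ramsey_aux F hF.1 M hM l p hp P hcover
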